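/- Fix an r-Hypergraph Label Cover instance and vectors v_j^c (j ∈ [r], c ∈ C) with the (r, ·, 2)-vector-system properties, and for an assignment σ and hyperedge h let S_h(σ) = Σ_{j=1}^r v_j^{π_h^{u_j(h)}(σ(u_j(h)))}. If ε ≥ 0 and every assignment weakly satisfies at most ε|𝓔| hyperedges, then for every two assignments σ₁ and σ₂, (1/|𝓔|) Σ_{h∈𝓔} ⟨S_h(σ₁), S_h(σ₂)⟩ ≥ 1 − 4ε. -/

import Mathlib

open Finset

/-- An instance of `r`-Hypergraph Label Cover: an `r`-partite hypergraph with vertex set `V`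
(partitioned into `r` classes by `part`), label set `L`, color set `C`, and hyperedge set `E`;
a hyperedge `h` consists of one vertex `u h j` from the `j`-th class for each `j ∈ [r]`,
together with a map `pi h j : L → C` (the map `π_h^{u_j(h)}`). -/
structure LabelCover (r : ℕ) (V L C E : Type*) where
  /-- the `j`-th vertex of hyperedge `h` -/
  u : E → Fin r → V
  /-- the map `π_h^{u_j(h)} : L → C` -/
  pi : E → Fin r → L → C
  /-- the partition class of a vertex -/
  part : V → Fin r
  /-- the `j`-th vertex of every hyperedge lies in the `j`-th class -/
  hpart : ∀ h j, part (u h j) = j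

variable {r : ℕ} {V L C E : Type*}

/-- An assignment `σ` satisfies a hyperedge `h` if all the colors
`π_h^{u_j(h)}(σ(u_j(h)))`, `j ∈ [r]`, coincide. -/
def LabelCover.Satisfies (I : LabelCover r V L C E) (σ : V → L) (h : E) : Prop :=
  ∀ j j' : Fin r, I.pi h j (σ (I.u h j)) = I.pi h j' (σ (I.u h j'))

/-- An assignment `σ` weakly satisfies a hyperedge `h` if two of the colors at distinct
indices coincide. -/
def LabelCover.WeaklySatisfies (I : LabelCover r V L C E) (σ : V → L) (h : E) : Prop :=
  ∃ j j' : Fin r, j ≠ j' ∧ I.pi h j (σ (I.u h j)) = I.pi h j' (σ (I.u h j'))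

/-- Fix an `r`-Hypergraph Label Cover instance and vectors `v j c`
with the `(r, ·, 2)`-vector-system properties, and let
`S_h(σ) = Σ_{j=1}^r v_j^{π_h^{u_j(h)}(σ(u_j(h)))}`. If `ε ≥ 0` and every assignment
weakly satisfies at most `ε|𝓔|` hyperedges, then for all assignments `σ₁, σ₂`,
`(1/|𝓔|) Σ_h ⟨S_h(σ₁), S_h(σ₂)⟩ ≥ 1 − 4ε`. -/
theorem basic_reduction_l2_inner {d0 : ℕ} [Fintype E] [Nonempty E]
    (hr : 2 ≤ r) (I : LabelCover r V L C E)
    (v : Fin r → C → Fin d0 → ℝ)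
    (hnorm : ∀ (j : Fin r) (c : C), ∑ w, v j c w ^ 2 = 1 / r)
    (horth : ∀ (c : C) (j j' : Fin r), j ≠ j' → ∑ w, v j c w * v j' c w = 0)
    (hcross : ∀ (j j' : Fin r) (c c' : C), c ≠ c' →
      ∑ w, v j c w * v j' c' w = 1 / (r : ℝ) ^ 2)
    (ε : ℝ) (hε : 0 ≤ ε)
    (hno : ∀ σ : V → L,
      (Nat.card {h : E // I.WeaklySatisfies σ h} : ℝ) ≤ ε * Fintype.card E) :
    ∀ σ₁ σ₂ : V → L,
      (1 / (Fintype.card E : ℝ)) * ∑ h : E, ∑ w,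
        (∑ j : Fin r, v j (I.pi h j (σ₁ (I.u h j))) w) *
        (∑ j : Fin r, v j (I.pi h j (σ₂ (I.u h j))) w) ≥ 1 - 4 * ε := by
  classical
  intro σ₁ σ₂
  have hr0 : 0 < r := lt_of_lt_of_le two_pos hr
  have hrR : (0:ℝ) < r := by exact_mod_cast hr0
  have hr1 : (1:ℝ) ≤ r := by exact_mod_cast hr0
  set n := Fintype.card E with hn_def
  have hn : 0 < n := Fintype.card_pos
  have hnR : (0:ℝ) < n := by exact_mod_cast hn
  set c1 : E → Fin r → C := fun h j => I.pi h j (σ₁ (I.u h j)) with hc1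
  set c2 : E → Fin r → C := fun h j => I.pi h j (σ₂ (I.u h j)) with hc2
  -- expand each inner product into pairs
  have key : ∀ h : E, ∑ w, (∑ j, v j (c1 h j) w) * (∑ j, v j (c2 h j) w)
      = ∑ p : Fin r × Fin r, ∑ w, v p.1 (c1 h p.1) w * v p.2 (c2 h p.2) w := by
    intro h
    calc ∑ w, (∑ j, v j (c1 h j) w) * (∑ j, v j (c2 h j) w)
        = ∑ w, ∑ j, ∑ j', v j (c1 h j) w * v j' (c2 h j') w :=
          Finset.sum_congr rfl fun w _ => Fintype.sum_mul_sum _ _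
      _ = ∑ j, ∑ w, ∑ j', v j (c1 h j) w * v j' (c2 h j') w := Finset.sum_comm
      _ = ∑ j, ∑ j', ∑ w, v j (c1 h j) w * v j' (c2 h j') w :=
          Finset.sum_congr rfl fun j _ => Finset.sum_comm
      _ = ∑ p : Fin r × Fin r, ∑ w, v p.1 (c1 h p.1) w * v p.2 (c2 h p.2) w := by
          rw [Fintype.sum_prod_type]
  -- the bad set
  set Bad : E → Finset (Fin r × Fin r) :=
    fun h => univ.filter (fun p => p.1 ≠ p.2 ∧ c1 h p.1 = c2 h p.2) with hBad
  -- per-hyperedge lower bound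
  have perh : ∀ h : E,
      ((r:ℝ)^2 - (Bad h).card) * (1 / (r:ℝ)^2)
        ≤ ∑ w, (∑ j, v j (c1 h j) w) * (∑ j, v j (c2 h j) w) := by
    intro h
    rw [key h]
    have step : ∑ p : Fin r × Fin r,
        (if p.1 ≠ p.2 ∧ c1 h p.1 = c2 h p.2 then (0:ℝ) else 1 / (r:ℝ)^2)
        ≤ ∑ p : Fin r × Fin r, ∑ w, v p.1 (c1 h p.1) w * v p.2 (c2 h p.2) w := by
      apply Finset.sum_le_sum
      intro p _
      by_cases hc : c1 h p.1 = c2 h p.2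
      · by_cases hj : p.1 = p.2
        · rw [if_neg (by simp [hj])]
          have heq : ∑ w, v p.1 (c1 h p.1) w * v p.2 (c2 h p.2) w = 1 / r := by
            rw [hc, hj, ← hnorm p.2 (c2 h p.2)]
            exact Finset.sum_congr rfl fun w _ => (sq _).symm
          rw [heq, div_le_div_iff₀ (by positivity) hrR]
          nlinarith
        · rw [if_pos ⟨hj, hc⟩, hc, horth (c2 h p.2) p.1 p.2 hj]
      · rw [if_neg (by tauto), hcross p.1 p.2 _ _ hc]
    refine le_trans ?_ step
    rw [Finset.sum_ite, Finset.sum_const, Finset.sum_const, smul_zero, zero_add,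
      nsmul_eq_mul]
    have hcards : (Bad h).card + (univ.filter
        (fun p : Fin r × Fin r => ¬(p.1 ≠ p.2 ∧ c1 h p.1 = c2 h p.2))).card
        = r * r := by
      rw [hBad]
      rw [Finset.card_filter_add_card_filter_not]
      simp [Fintype.card_prod]
    have hle : ((r:ℝ)^2 - (Bad h).card) ≤ ((univ.filter
        (fun p : Fin r × Fin r => ¬(p.1 ≠ p.2 ∧ c1 h p.1 = c2 h p.2))).card : ℝ) := by
      have : ((Bad h).card : ℝ) + ((univ.filter
        (fun p : Fin r × Fin r => ¬(p.1 ≠ p.2 ∧ c1 h p.1 = c2 h p.2))).card : ℝ)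
        = (r:ℝ) * r := by exact_mod_cast hcards
      nlinarith
    apply mul_le_mul_of_nonneg_right hle (by positivity)
  -- bound on total badness
  have badbound : ∑ h : E, ((Bad h).card : ℝ) ≤ (r:ℝ)^2 * ε * n := by
    have swap : ∑ h : E, ((Bad h).card : ℝ)
        = ∑ p : Fin r × Fin r, ((univ.filter (fun h : E =>
            p.1 ≠ p.2 ∧ c1 h p.1 = c2 h p.2)).card : ℝ) := by
      push_cast
      rw [← Nat.cast_sum, ← Nat.cast_sum]
      congr 1
      simp only [hBad, Finset.card_filter]
      rw [Finset.sum_comm]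
    rw [swap]
    have each : ∀ p : Fin r × Fin r, ((univ.filter (fun h : E =>
        p.1 ≠ p.2 ∧ c1 h p.1 = c2 h p.2)).card : ℝ) ≤ ε * n := by
      intro p
      by_cases hj : p.1 = p.2
      · simp [hj]
        positivity
      · set τ : V → L := fun x => if I.part x = p.1 then σ₁ x else σ₂ x with hτ
        have hsub : (univ.filter (fun h : E => p.1 ≠ p.2 ∧ c1 h p.1 = c2 h p.2)).card
            ≤ (univ.filter (fun h : E => I.WeaklySatisfies τ h)).card := by
          apply Finset.card_le_card
          intro h hh
          simp only [Finset.mem_filter, Finset.mem_univ, true_and] at hh ⊢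
          refine ⟨p.1, p.2, hj, ?_⟩
          have h1 : τ (I.u h p.1) = σ₁ (I.u h p.1) := by
            simp [hτ, I.hpart h p.1]
          have h2 : τ (I.u h p.2) = σ₂ (I.u h p.2) := by
            simp only [hτ]
            rw [if_neg]
            rw [I.hpart h p.2]
            exact fun hx => hj hx.symm
          rw [h1, h2]
          exact hh.2
        have hcard : ((univ.filter (fun h : E => I.WeaklySatisfies τ h)).card : ℝ)
            ≤ ε * n := by
          have := hno τ
          rwa [Nat.card_eq_fintype_card, Fintype.card_subtype] at this
        calc ((univ.filter (fun h : E => p.1 ≠ p.2 ∧ c1 h p.1 = c2 h p.2)).card : ℝ)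
            ≤ ((univ.filter (fun h : E => I.WeaklySatisfies τ h)).card : ℝ) := by
              exact_mod_cast hsub
          _ ≤ ε * n := hcard
    calc ∑ p : Fin r × Fin r, ((univ.filter (fun h : E =>
          p.1 ≠ p.2 ∧ c1 h p.1 = c2 h p.2)).card : ℝ)
        ≤ ∑ _p : Fin r × Fin r, ε * n := Finset.sum_le_sum (fun p _ => each p)
      _ = (r:ℝ)^2 * ε * n := by
          rw [Finset.sum_const, Finset.card_univ, Fintype.card_prod, Fintype.card_fin,
            nsmul_eq_mul]
          push_cast
          ring
  -- assemble
  have total : (n : ℝ) * (1 - ε) ≤ ∑ h : E, ∑ w,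
      (∑ j, v j (c1 h j) w) * (∑ j, v j (c2 h j) w) := by
    have step1 : ∑ h : E, ((r:ℝ)^2 - (Bad h).card) * (1 / (r:ℝ)^2)
        ≤ ∑ h : E, ∑ w, (∑ j, v j (c1 h j) w) * (∑ j, v j (c2 h j) w) :=
      Finset.sum_le_sum (fun h _ => perh h)
    have step2 : (n : ℝ) * (1 - ε) ≤ ∑ h : E, ((r:ℝ)^2 - (Bad h).card) * (1 / (r:ℝ)^2) := by
      have expand : ∑ h : E, ((r:ℝ)^2 - (Bad h).card) * (1 / (r:ℝ)^2)
          = ((n : ℝ) * (r:ℝ)^2 - ∑ h : E, ((Bad h).card : ℝ)) * (1 / (r:ℝ)^2) := by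
        rw [← Finset.sum_mul, Finset.sum_sub_distrib, Finset.sum_const, Finset.card_univ,
          nsmul_eq_mul]
      rw [expand]
      have hr2 : (0:ℝ) < (r:ℝ)^2 := by positivity
      calc (n:ℝ)*(1-ε) = ((n:ℝ)*(1-ε)*(r:ℝ)^2) * (1/(r:ℝ)^2) := by field_simp
        _ ≤ _ := mul_le_mul_of_nonneg_right (by nlinarith) (by positivity)
    linarith
  rw [ge_iff_le, hc1, hc2] at *
  calc (1:ℝ) - 4*ε ≤ 1 - ε := by linarith
    _ ≤ (1 / (n:ℝ)) * ((n:ℝ) * (1-ε)) := by field_simp; exact le_rfl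
    _ ≤ _ := by
        apply mul_le_mul_of_nonneg_left _ (by positivity)
        exact total
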